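/- Let D be compact convex, f convex differentiable with curvature constant C_f, and g(x) := max_{s ∈ D} ⟨x - s, ∇f(x)⟩. Let x ∈ D, α ∈ (0,1], and let s ∈ D satisfy ⟨s, ∇f(x)⟩ ≤ min_{y ∈ D} ⟨y, ∇f(x)⟩ + α·C_f. Then f(x + α(s - x)) ≤ f(x) - α·g(x) + 2α²·C_f. -/

import Mathlib

/-- Step improvement with approximate linear minimization: for convex differentiable
`f` with curvature constant `Cf` over the compact convex set `D`, duality gap
`g(x) = max_{s ∈ D} ⟨x - s, ∇f(x)⟩`, `x ∈ D`, step size `α ∈ (0,1]`, and `s ∈ D`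
an `α·Cf`-approximate minimizer of the linearization over `D`, we have
`f(x + α(s - x)) ≤ f(x) - α g(x) + 2 α² Cf`. -/
theorem step_improvement_approx_linear_minimizer
    {X : Type*} [NormedAddCommGroup X] [InnerProductSpace ℝ X] [CompleteSpace X]
    (D : Set X) (hDcomp : IsCompact D) (hDconv : Convex ℝ D)
    (f : X → ℝ) (hdiff : Differentiable ℝ f) (hconv : ConvexOn ℝ D f)
    (Cf : ℝ)
    (hCf : Cf = sSup {r : ℝ | ∃ x ∈ D, ∃ s ∈ D, ∃ α ∈ Set.Icc (0 : ℝ) 1,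
        r = (1 / α ^ 2) *
          (f (x + α • (s - x)) - f x - inner ℝ (x + α • (s - x) - x) (gradient f x))})
    (hbdd : BddAbove {r : ℝ | ∃ x ∈ D, ∃ s ∈ D, ∃ α ∈ Set.Icc (0 : ℝ) 1,
        r = (1 / α ^ 2) *
          (f (x + α • (s - x)) - f x - inner ℝ (x + α • (s - x) - x) (gradient f x))})
    (g : X → ℝ)
    (hg : ∀ x, g x = sSup ((fun s => (inner ℝ (x - s) (gradient f x) : ℝ)) '' D))
    (x : X) (hx : x ∈ D) (α : ℝ) (hα : α ∈ Set.Ioc (0 : ℝ) 1)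
    (s : X) (hs : s ∈ D)
    (happrox : (inner ℝ s (gradient f x) : ℝ) ≤
      sInf ((fun y => (inner ℝ y (gradient f x) : ℝ)) '' D) + α * Cf) :
    f (x + α • (s - x)) ≤ f x - α * g x + 2 * α ^ 2 * Cf := by
  obtain ⟨hα0, hα1⟩ := hα
  set G := gradient f x with hG
  -- minimizer of the linear function on D
  have hcont : ContinuousOn (fun y : X => (inner ℝ y G : ℝ)) D :=
    (continuous_id.inner continuous_const).continuousOn
  obtain ⟨y₀, hy₀D, hy₀min⟩ := hDcomp.exists_isMinOn ⟨x, hx⟩ hcont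
  have hInf : sInf ((fun y => (inner ℝ y G : ℝ)) '' D) = inner ℝ y₀ G := by
    have hglb : IsGLB ((fun y => (inner ℝ y G : ℝ)) '' D) (inner ℝ y₀ G) := by
      constructor
      · rintro r ⟨y, hy, rfl⟩
        exact hy₀min hy
      · intro b hb
        exact hb ⟨y₀, hy₀D, rfl⟩
    exact hglb.csInf_eq ⟨_, y₀, hy₀D, rfl⟩
  -- g x = ⟨x, G⟩ - min
  have hgx : g x = (inner ℝ x G : ℝ) - inner ℝ y₀ G := by
    rw [hg x]
    apply IsGreatest.csSup_eq
    constructor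
    · exact ⟨y₀, hy₀D, by rw [← hG]; simp [inner_sub_left]⟩
    · rintro r ⟨y, hy, rfl⟩
      have h2 : (inner ℝ y₀ G : ℝ) ≤ inner ℝ y G := hy₀min hy
      simp only [inner_sub_left]
      rw [← hG]
      linarith
  -- curvature bound
  have hr : (1 / α ^ 2) *
      (f (x + α • (s - x)) - f x - inner ℝ (x + α • (s - x) - x) G) ≤ Cf := by
    rw [hCf]
    exact le_csSup hbdd ⟨x, hx, s, hs, α, ⟨le_of_lt hα0, hα1⟩, rfl⟩
  have hα2 : (0 : ℝ) < α ^ 2 := by positivity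
  have hinner : (inner ℝ (x + α • (s - x) - x) G : ℝ) = α * ((inner ℝ s G : ℝ) - inner ℝ x G) := by
    have h3 : x + α • (s - x) - x = α • (s - x) := by abel
    rw [h3, real_inner_smul_left, inner_sub_left]
  have hcurv : f (x + α • (s - x)) - f x - α * ((inner ℝ s G : ℝ) - inner ℝ x G) ≤ α ^ 2 * Cf := by
    have heq : f (x + α • (s - x)) - f x - α * ((inner ℝ s G : ℝ) - inner ℝ x G)
        = α ^ 2 * ((1 / α ^ 2) * (f (x + α • (s - x)) - f x - inner ℝ (x + α • (s - x) - x) G)) := by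
      rw [hinner]; field_simp
    rw [heq]
    exact mul_le_mul_of_nonneg_left hr (le_of_lt hα2)
  have happ : (inner ℝ s G : ℝ) ≤ (inner ℝ y₀ G : ℝ) + α * Cf := by
    rw [hInf] at happrox; exact happrox
  nlinarith [hcurv, happ, mul_le_mul_of_nonneg_left happ (le_of_lt hα0)]
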